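/- Let m ≥ 2 with m ≡ 2 (mod 8). Then wt(f_{0,1}) = wt(f_{1,2}) = 2^{m-1} + 2^{(m-2)/2} and wt(f_{2,3}) = wt(f_{0,3}) = 2^{m-1} - 2^{(m-2)/2}, where wt(f) denotes the number of x ∈ F_2^m with f(x) = 1. -/

import Mathlib

open Finset

/-- Hamming weight of a vector of `F₂^m`. -/
def wt {m : ℕ} (x : Fin m → ZMod 2) : ℕ :=
  (Finset.univ.filter (fun i => x i = 1)).card

/-- The Boolean function `f_{i₁,i₂}` : value `1` iff `wt x ≡ i₁ or i₂ (mod 4)`. -/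
def bf (i₁ i₂ : ℕ) {m : ℕ} (x : Fin m → ZMod 2) : ZMod 2 :=
  if wt x % 4 = i₁ ∨ wt x % 4 = i₂ then 1 else 0

/-- Inner product over `F₂`. -/
def dot {m : ℕ} (a x : Fin m → ZMod 2) : ZMod 2 := ∑ i, a i * x i

lemma card_wt_eq (m k : ℕ) :
    (Finset.univ.filter fun x : Fin m → ZMod 2 => wt x = k).card = m.choose k := by
  have : ((Finset.univ : Finset (Fin m)).powersetCard k).card = m.choose k := by
    simp [Finset.card_powersetCard]
  rw [← this]
  apply Finset.card_nbij' (fun x => Finset.univ.filter (fun i => x i = 1))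
    (fun s => fun i => if i ∈ s then 1 else 0)
  · intro x hx
    simp only [Finset.mem_coe, Finset.mem_filter, Finset.mem_univ, true_and] at hx
    simp [Finset.mem_powersetCard, ← hx, wt]
  · intro s hs
    simp only [Finset.mem_coe, Finset.mem_powersetCard] at hs
    simp only [Finset.mem_coe, Finset.mem_filter, Finset.mem_univ, true_and]; simp only [wt]
    rw [← hs.2]
    congr 1
    ext i
    simp only [Finset.mem_filter, Finset.mem_univ, true_and]
    split_ifs with h <;> simp [h]
  · intro x _
    funext i
    rcases (show ∀ a : ZMod 2, a = 0 ∨ a = 1 by decide) (x i) with h | h <;> simp [h]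
  · intro s _
    ext i
    simp only [Finset.mem_filter, Finset.mem_univ, true_and]
    split_ifs with h <;> simp [h]

lemma card_p_eq (m : ℕ) (p : ℕ → Prop) [DecidablePred p] :
    (Finset.univ.filter fun x : Fin m → ZMod 2 => p (wt x)).card
      = ∑ k ∈ Finset.range (m + 1), if p k then m.choose k else 0 := by
  rw [Finset.card_eq_sum_card_fiberwise
      (f := fun x : Fin m → ZMod 2 => wt x) (t := Finset.range (m + 1))
      (fun x _ => by
        simp only [Finset.mem_coe, Finset.mem_range, Nat.lt_succ_iff, wt]
        exact (Finset.card_filter_le _ _).trans (by simp))]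
  refine Finset.sum_congr rfl fun k _ => ?_
  rw [Finset.filter_filter]
  by_cases hp : p k
  · rw [if_pos hp, ← card_wt_eq m k]
    congr 1
    apply Finset.filter_congr
    intro x _
    constructor
    · exact fun h => h.2
    · exact fun h => ⟨h ▸ hp, h⟩
  · rw [if_neg hp, Finset.card_eq_zero]
    apply Finset.filter_eq_empty_iff.mpr
    intro x _
    rintro ⟨h1, h2⟩
    exact hp (h2 ▸ h1)


lemma gauss_eqs (t : ℕ) :
    ((∑ k ∈ Finset.range (8*t+2+1), if k % 4 = 0 then (8*t+2).choose k else 0 : ℕ) : ℤ)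
        = ((∑ k ∈ Finset.range (8*t+2+1), if k % 4 = 2 then (8*t+2).choose k else 0 : ℕ) : ℤ)
      ∧ ((∑ k ∈ Finset.range (8*t+2+1), if k % 4 = 1 then (8*t+2).choose k else 0 : ℕ) : ℤ)
        = ((∑ k ∈ Finset.range (8*t+2+1), if k % 4 = 3 then (8*t+2).choose k else 0 : ℕ) : ℤ)
          + 2^(4*t+1) := by
  set m := 8*t+2 with hm
  set i : Zsqrtd (-1) := Zsqrtd.sqrtd with hi
  have hi2 : i^2 = -1 := by
    ext <;> simp [hi, pow_two, Zsqrtd.re_mul, Zsqrtd.im_mul]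
  have hi4 : i^4 = 1 := by
    rw [show (4:ℕ) = 2*2 from rfl, pow_mul, hi2]; ring
  have hpow : ∀ k : ℕ, i ^ k = i ^ (k % 4) := by
    intro k
    conv_lhs => rw [show k = 4 * (k/4) + k % 4 by omega]
    rw [pow_add, pow_mul, hi4, one_pow, one_mul]
  -- the binomial expansion
  have hA1 : (i + 1)^m = ∑ k ∈ Finset.range (m+1), i ^ k * ((m.choose k : ℕ) : Zsqrtd (-1)) := by
    rw [add_pow]
    refine Finset.sum_congr rfl fun k _ => ?_
    ring
  -- the closed form
  have hA2 : (i + 1)^m = ((2^(4*t+1) : ℤ) : Zsqrtd (-1)) * i := by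
    have h2 : (i + 1)^2 = 2 * i := by linear_combination hi2
    rw [hm, show 8*t+2 = 2*(4*t+1) by ring, pow_mul, h2, mul_pow]
    have h41 : (4*t+1) % 4 = 1 := by omega
    have : i ^ (4*t+1) = i := by rw [hpow, h41, pow_one]
    rw [this]
    push_cast
    ring
  -- group by residue
  have hfib : ∑ k ∈ Finset.range (m+1), i ^ k * ((m.choose k : ℕ) : Zsqrtd (-1))
      = ∑ r ∈ Finset.range 4,
          ((∑ k ∈ Finset.range (m+1), if k % 4 = r then m.choose k else 0 : ℕ) : Zsqrtd (-1)) * i ^ r := by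
    rw [← Finset.sum_fiberwise_of_maps_to (g := fun k => k % 4) (t := Finset.range 4)
        (fun k _ => Finset.mem_range.mpr (Nat.mod_lt _ (by norm_num)))]
    refine Finset.sum_congr rfl fun r _ => ?_
    push_cast
    rw [Finset.sum_filter, Finset.sum_mul]
    refine Finset.sum_congr rfl fun k hk => ?_
    by_cases h : k % 4 = r
    · rw [if_pos h, if_pos h, hpow, h]; ring
    · simp [h]
  have key := hA2.symm.trans (hA1.trans hfib)
  rw [show (4:ℕ) = 3+1 from rfl] at key
  rw [Finset.sum_range_succ, Finset.sum_range_succ, Finset.sum_range_succ,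
    Finset.sum_range_succ, Finset.sum_range_zero] at key
  have h3 : i^3 = -i := by
    rw [show (3:ℕ) = 2+1 from rfl, pow_add, hi2]; ring
  rw [hi2, h3, pow_zero, pow_one] at key
  have hre := congrArg Zsqrtd.re key
  have him := congrArg Zsqrtd.im key
  simp only [Zsqrtd.re_add, Zsqrtd.im_add, Zsqrtd.re_mul, Zsqrtd.im_mul, Zsqrtd.re_neg,
    Zsqrtd.im_neg, Zsqrtd.re_natCast, Zsqrtd.im_natCast, Zsqrtd.re_intCast, Zsqrtd.im_intCast,
    Zsqrtd.re_sqrtd, Zsqrtd.im_sqrtd, Zsqrtd.re_one, Zsqrtd.im_one, Zsqrtd.re_zero,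
    Zsqrtd.im_zero, hi] at hre him
  constructor
  · linarith [hre]
  · linarith [him]

lemma card_bf (m a b : ℕ) (hab : a ≠ b) :
    (Finset.univ.filter fun x : Fin m → ZMod 2 => bf a b x = 1).card
      = (∑ k ∈ Finset.range (m+1), if k % 4 = a then m.choose k else 0)
        + (∑ k ∈ Finset.range (m+1), if k % 4 = b then m.choose k else 0) := by
  have hiff : ∀ x : Fin m → ZMod 2, bf a b x = 1 ↔ (wt x % 4 = a ∨ wt x % 4 = b) := by
    intro x
    unfold bf
    split_ifs with h
    · simp [h]
    · simp [h]
  have hset : (Finset.univ.filter fun x : Fin m → ZMod 2 => bf a b x = 1)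
      = Finset.univ.filter fun x : Fin m → ZMod 2 => (fun k => k % 4 = a ∨ k % 4 = b) (wt x) :=
    Finset.filter_congr fun x _ => hiff x
  rw [hset, card_p_eq m (fun k => k % 4 = a ∨ k % 4 = b), ← Finset.sum_add_distrib]
  refine Finset.sum_congr rfl fun k _ => ?_
  by_cases h1 : k % 4 = a
  · simp only [h1]
    simp [hab]
  · by_cases h2 : k % 4 = b
    · simp only [h2]
      simp [Ne.symm hab]
    · simp [h1, h2]

lemma total_eq (m : ℕ) :
    (∑ k ∈ Finset.range (m+1), if k % 4 = 0 then m.choose k else 0)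
      + (∑ k ∈ Finset.range (m+1), if k % 4 = 1 then m.choose k else 0)
      + (∑ k ∈ Finset.range (m+1), if k % 4 = 2 then m.choose k else 0)
      + (∑ k ∈ Finset.range (m+1), if k % 4 = 3 then m.choose k else 0)
      = 2 ^ m := by
  rw [← Nat.sum_range_choose m, ← Finset.sum_add_distrib, ← Finset.sum_add_distrib,
    ← Finset.sum_add_distrib]
  refine Finset.sum_congr rfl fun k _ => ?_
  rcases (show k % 4 = 0 ∨ k % 4 = 1 ∨ k % 4 = 2 ∨ k % 4 = 3 by omega) with h | h | h | h <;>
    simp [h]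

lemma alt_eq (m : ℕ) (hm : m ≠ 0) :
    ((∑ k ∈ Finset.range (m+1), if k % 4 = 0 then m.choose k else 0 : ℕ) : ℤ)
      + (∑ k ∈ Finset.range (m+1), if k % 4 = 2 then m.choose k else 0 : ℕ)
      = ((∑ k ∈ Finset.range (m+1), if k % 4 = 1 then m.choose k else 0 : ℕ) : ℤ)
        + (∑ k ∈ Finset.range (m+1), if k % 4 = 3 then m.choose k else 0 : ℕ) := by
  have halt : ∑ k ∈ Finset.range (m+1), (-1 : ℤ) ^ k * m.choose k = 0 := by
    rw [Int.alternating_sum_range_choose, if_neg hm]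
  have hpt : ∀ k : ℕ, ((-1 : ℤ) ^ k * m.choose k)
      = ((if k % 4 = 0 then (m.choose k : ℤ) else 0) + (if k % 4 = 2 then (m.choose k : ℤ) else 0))
        - ((if k % 4 = 1 then (m.choose k : ℤ) else 0)
            + (if k % 4 = 3 then (m.choose k : ℤ) else 0)) := by
    intro k
    rcases Nat.even_or_odd k with h | h
    · rw [h.neg_one_pow]
      have h2 := Nat.even_iff.mp h
      rcases (show k % 4 = 0 ∨ k % 4 = 2 by omega) with h4 | h4 <;> simp [h4]
    · rw [h.neg_one_pow]
      have h2 := Nat.odd_iff.mp h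
      rcases (show k % 4 = 1 ∨ k % 4 = 3 by omega) with h4 | h4 <;> simp [h4]
  rw [Finset.sum_congr rfl fun k _ => hpt k] at halt
  rw [Finset.sum_sub_distrib, Finset.sum_add_distrib, Finset.sum_add_distrib] at halt
  push_cast
  linarith [halt]

theorem stmt_11 (m : ℕ) (hm : 2 ≤ m) (h8 : m % 8 = 2) :
    (Finset.univ.filter (fun x : Fin m → ZMod 2 => bf 0 1 x = 1)).card
        = 2 ^ (m - 1) + 2 ^ ((m - 2) / 2) ∧
      (Finset.univ.filter (fun x : Fin m → ZMod 2 => bf 1 2 x = 1)).card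
        = 2 ^ (m - 1) + 2 ^ ((m - 2) / 2) ∧
      (Finset.univ.filter (fun x : Fin m → ZMod 2 => bf 2 3 x = 1)).card
        = 2 ^ (m - 1) - 2 ^ ((m - 2) / 2) ∧
      (Finset.univ.filter (fun x : Fin m → ZMod 2 => bf 0 3 x = 1)).card
        = 2 ^ (m - 1) - 2 ^ ((m - 2) / 2) := by
  obtain ⟨t, rfl⟩ : ∃ t, m = 8 * t + 2 := ⟨m / 8, by omega⟩
  have e1 := total_eq (8*t+2)
  have e2 := alt_eq (8*t+2) (by omega)
  obtain ⟨e3, e4⟩ := gauss_eqs t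
  have c01 := card_bf (8*t+2) 0 1 (by norm_num)
  have c12 := card_bf (8*t+2) 1 2 (by norm_num)
  have c23 := card_bf (8*t+2) 2 3 (by norm_num)
  have c03 := card_bf (8*t+2) 0 3 (by norm_num)
  have g1 : 8*t+2-1 = 8*t+1 := by omega
  have g2 : (8*t+2-2)/2 = 4*t := by omega
  rw [c01, c12, c23, c03, g1, g2]
  have p1 : 2 ^ (8*t+1) = 2 * (2 ^ (4*t) * 2 ^ (4*t)) := by
    rw [show 8*t+1 = 4*t + (4*t+1) by ring, pow_add, pow_add, pow_one]; ring
  have p2 : 2 ^ (8*t+2) = 4 * (2 ^ (4*t) * 2 ^ (4*t)) := by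
    rw [show 8*t+2 = 4*t + (4*t+2) by ring, pow_add, pow_add]; ring
  have p3 : (2 : ℤ) ^ (4*t+1) = 2 * (2 : ℤ) ^ (4*t) := by
    rw [pow_add, pow_one]; ring
  have hcast : ((2 ^ (4*t) : ℕ) : ℤ) = (2 : ℤ) ^ (4*t) := by push_cast; ring
  rw [p2] at e1
  rw [p3, ← hcast] at e4
  rw [p1]
  obtain ⟨a, ha⟩ : ∃ a : ℕ, 2 ^ (4*t) = a := ⟨_, rfl⟩
  rw [ha] at e1 e4 ⊢
  obtain ⟨b, hb⟩ : ∃ b : ℕ, a * a = b := ⟨_, rfl⟩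
  rw [hb] at e1 ⊢
  refine ⟨by omega, by omega, by omega, by omega⟩
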